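/- arXiv:1812.09409 — 7 statements merged into one kernel-verified Lean document; each statement's English description precedes it below -/
import Mathlib

section
/- Let v : {1,…,N} → ℝ be nondecreasing with nonnegative entries (a sorted potential vector), let μ ∈ (0,1), w > 0, and let i₀ ∈ {1,…,N} be the index of the firing component. Define v' : {1,…,N} → ℝ by v'(1) = 0, v'(i) = μ v(i−1) + w for 2 ≤ i ≤ i₀, and v'(i) = μ v(i) + w for i₀ < i ≤ N. Then v' is nondecreasing and v' is a rearrangement of the vector Δ^{i₀}(v); that is, v' gives the order statistics of the potential vector obtained after component i₀ fires. -/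
/-- The firing map `Δ^{i₀}` : after component `i₀` fires, its potential resets to
`0` and every other component `j` gets potential `μ * u j + w`. -/
def fireMap (N : ℕ) (μ w : ℝ) (i₀ : Fin N) (u : Fin N → ℝ) : Fin N → ℝ :=
  fun j => if j = i₀ then 0 else μ * u j + w

/-- Let `v : Fin N → ℝ` (indices `0,…,N-1` standing for `1,…,N`) be
nondecreasing with nonnegative entries, `μ ∈ (0,1)`, `w > 0`, and let `i₀` be the
index of the firing component.  Define `v'` by `v' 0 = 0`,
`v' i = μ v (i-1) + w` for `1 ≤ i ≤ i₀`, and `v' i = μ v i + w` for `i > i₀`.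
Then `v'` is nondecreasing and is a rearrangement of `Δ^{i₀}(v)`, i.e. `v'`
gives the order statistics of the potential vector after component `i₀` fires. -/
theorem sorted_after_fire (N : ℕ) (hN : 2 ≤ N) (μ w : ℝ)
    (hμ0 : 0 < μ) (hμ1 : μ < 1) (hw : 0 < w)
    (v : Fin N → ℝ) (hvmono : Monotone v) (hvnonneg : ∀ i, 0 ≤ v i)
    (i₀ : Fin N) (v' : Fin N → ℝ)
    (hv' : ∀ i : Fin N, v' i =
      if i.val = 0 then 0
      else if i.val ≤ i₀.val then
        μ * v ⟨i.val - 1, lt_of_le_of_lt (Nat.sub_le _ _) i.isLt⟩ + w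
      else μ * v i + w) :
    Monotone v' ∧
      ∃ σ : Equiv.Perm (Fin N), ∀ i, v' i = fireMap N μ w i₀ v (σ i) := by
  have key : ∀ a b : Fin N, a ≤ b → 0 ≤ μ * v a + w := by
    intro a b _
    have := hvnonneg a
    nlinarith
  have mono : ∀ a b : Fin N, a.val ≤ b.val → μ * v a + w ≤ μ * v b + w := by
    intro a b hab
    have : v a ≤ v b := hvmono hab
    nlinarith
  have nn : ∀ a : Fin N, (0:ℝ) ≤ μ * v a + w := by
    intro a; have := hvnonneg a; nlinarith
  constructor
  · intro i j hij
    rw [hv' i, hv' j]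
    have hij' : i.val ≤ j.val := hij
    split_ifs
    all_goals first
      | exact le_refl 0
      | exact nn _
      | omega
      | (apply mono; first | omega | (simp only [Fin.val_mk]; omega))
  · set f : Fin N → Fin N := fun i => if i.val = 0 then i₀
      else if i.val ≤ i₀.val then ⟨i.val - 1, lt_of_le_of_lt (Nat.sub_le _ _) i.isLt⟩
      else i with hf
    have hinj : Function.Injective f := by
      intro a b hab
      simp only [hf] at hab
      split_ifs at hab with h1 h2 h3 h4 h5 h6 <;>
        (try exact hab) <;>
        (have h := congrArg Fin.val hab; (try simp only [Fin.val_mk] at h);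
         exact Fin.ext (by omega))
    refine ⟨Equiv.ofBijective f ((Finite.injective_iff_bijective).mp hinj), ?_⟩
    intro i
    have happ : (Equiv.ofBijective f ((Finite.injective_iff_bijective).mp hinj)) i = f i := rfl
    rw [hv' i, happ]
    simp only [hf, fireMap]
    by_cases h1 : i.val = 0
    · rw [if_pos h1, if_pos h1, if_pos rfl]
    · by_cases h2 : i.val ≤ i₀.val
      · rw [if_neg h1, if_pos h2, if_neg h1, if_pos h2, if_neg]
        intro hc
        have := congrArg Fin.val hc
        simp only [Fin.val_mk] at this
        omega
      · rw [if_neg h1, if_neg h2, if_neg h1, if_neg h2, if_neg]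
        intro hc
        exact h2 (le_of_eq (congrArg Fin.val hc))
end

section
/- Invariance of the metastable basin under firing: Let μ ∈ (0,1), w > 0, γ = w/(1−μ), and let v : {1,…,N} → ℝ be nondecreasing with (1 − μ^{i−1})·γ ≤ v(i) ≤ γ for all i ∈ {1,…,N}. Let i₀ ∈ {1,…,N} and let v' be the sorted vector after component i₀ fires, namely v'(1) = 0, v'(i) = μ v(i−1) + w for 2 ≤ i ≤ i₀, and v'(i) = μ v(i) + w for i₀ < i ≤ N. Then (1 − μ^{i−1})·γ ≤ v'(i) ≤ γ for all i ∈ {1,…,N}. (Equivalently, the set B = {x ∈ ℝ^N sorted : (1−μ^{i−1})γ ≤ x_i ≤ γ for all i} is invariant under the firing step.) -/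
/-- Invariance of the metastable basin under firing.  Let
`μ ∈ (0,1)`, `w > 0`, `γ = w/(1−μ)`, and let `v : Fin N → ℝ` (indices `0,…,N-1`
standing for `1,…,N`) be nondecreasing with `(1 − μ^i) γ ≤ v i ≤ γ` for all `i`
(0-based, so `μ^i` corresponds to `μ^{i−1}` with 1-based indices).  Let `i₀` be
the firing index and let `v'` be the sorted vector after component `i₀` fires:
`v' 0 = 0`, `v' i = μ v (i−1) + w` for `1 ≤ i ≤ i₀`, and `v' i = μ v i + w` for
`i > i₀`.  Then `(1 − μ^i) γ ≤ v' i ≤ γ` for all `i`. -/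
theorem basin_invariant (N : ℕ) (hN : 2 ≤ N) (μ w : ℝ)
    (hμ0 : 0 < μ) (hμ1 : μ < 1) (hw : 0 < w)
    (v : Fin N → ℝ) (hvmono : Monotone v)
    (hv : ∀ i : Fin N,
      (1 - μ ^ (i : ℕ)) * (w / (1 - μ)) ≤ v i ∧ v i ≤ w / (1 - μ))
    (i₀ : Fin N) (v' : Fin N → ℝ)
    (hv' : ∀ i : Fin N, v' i =
      if i.val = 0 then 0
      else if i.val ≤ i₀.val then
        μ * v ⟨i.val - 1, lt_of_le_of_lt (Nat.sub_le _ _) i.isLt⟩ + w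
      else μ * v i + w) :
    ∀ i : Fin N,
      (1 - μ ^ (i : ℕ)) * (w / (1 - μ)) ≤ v' i ∧ v' i ≤ w / (1 - μ) := by
  intro i
  have h1μ : 0 < 1 - μ := by linarith
  set γ := w / (1 - μ) with hγdef
  have hγw : μ * γ + w = γ := by
    rw [hγdef]
    field_simp [h1μ.ne']
    ring
  have hγpos : 0 < γ := div_pos hw h1μ
  rw [hv' i]
  split_ifs with h0 hle
  · refine ⟨?_, hγpos.le⟩
    rw [h0]
    simp
  · set j : Fin N := ⟨i.val - 1, lt_of_le_of_lt (Nat.sub_le _ _) i.isLt⟩ with hj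
    obtain ⟨hl, hu⟩ := hv j
    have hpow : μ * μ ^ (j : ℕ) = μ ^ (i : ℕ) := by
      rw [← pow_succ']
      congr 1
      simp only [hj]
      omega
    have key : μ * ((1 - μ ^ (j : ℕ)) * γ) + w = (1 - μ ^ (i : ℕ)) * γ := by
      linear_combination hγw - γ * hpow
    constructor
    · nlinarith [mul_le_mul_of_nonneg_left hl hμ0.le]
    · nlinarith [mul_le_mul_of_nonneg_left hu hμ0.le]
  · obtain ⟨hl, hu⟩ := hv i
    have hpp : μ * μ ^ (i : ℕ) ≤ μ ^ (i : ℕ) := by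
      nlinarith [pow_pos hμ0 (i : ℕ)]
    constructor
    · nlinarith [mul_le_mul_of_nonneg_left hl hμ0.le]
    · nlinarith [mul_le_mul_of_nonneg_left hu hμ0.le]
end

section
/- Bounds on the firing probability in the metastable basin: Let μ ∈ (0,1), w > 0, γ = w/(1−μ), and let v : {1,…,N} → ℝ satisfy v(1) = 0 and (1 − μ^{i−1})·γ ≤ v(i) ≤ γ for all i ∈ {1,…,N}. Then η ≤ (1/N) Σ_{i=1}^{N} φ(v(i)) ≤ θ, where θ = φ(γ)(1 − 1/N) and η = φ(γ)(1 − (1/N)(1−μ^N)/(1−μ)). -/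
/-- The firing probability function: `φ(u) = min(u,1)` for `u ≥ 0` and
`φ(u) = 0` for `u ≤ 0`. -/
noncomputable def phi (u : ℝ) : ℝ := min (max u 0) 1

lemma phi_mono : Monotone phi := fun a b h => by
  unfold phi
  exact min_le_min (max_le_max h le_rfl) le_rfl

lemma phi_scale (c γ : ℝ) (hc0 : 0 ≤ c) (hc1 : c ≤ 1) (hγ : 0 ≤ γ) :
    c * phi γ ≤ phi (c * γ) := by
  unfold phi
  rw [max_eq_left hγ, max_eq_left (mul_nonneg hc0 hγ)]
  rcases le_total γ 1 with h | h
  · rw [min_eq_left h, min_eq_left (by nlinarith)]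
  · rw [min_eq_right h]
    rcases le_total (c * γ) 1 with h2 | h2
    · rw [min_eq_left h2]; nlinarith
    · rw [min_eq_right h2]; linarith

/-- Bounds on the firing probability in the metastable basin.
Let `γ = w/(1−μ)` and let `v : Fin N → ℝ` (0-based indices) satisfy `v 0 = 0`
and `(1 − μ^i) γ ≤ v i ≤ γ` for all `i`.  Then
`η ≤ (1/N) Σ_i φ(v i) ≤ θ` where `θ = φ(γ)(1 − 1/N)` and
`η = φ(γ)(1 − (1/N)(1−μ^N)/(1−μ))`. -/
theorem firing_prob_bounds (N : ℕ) (hN : 2 ≤ N) (μ w : ℝ)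
    (hμ0 : 0 < μ) (hμ1 : μ < 1) (hw : 0 < w)
    (v : Fin N → ℝ)
    (hv0 : v ⟨0, by omega⟩ = 0)
    (hv : ∀ i : Fin N,
      (1 - μ ^ (i : ℕ)) * (w / (1 - μ)) ≤ v i ∧ v i ≤ w / (1 - μ)) :
    phi (w / (1 - μ)) * (1 - (1 / (N : ℝ)) * (1 - μ ^ N) / (1 - μ))
        ≤ (1 / (N : ℝ)) * ∑ i, phi (v i) ∧
    (1 / (N : ℝ)) * ∑ i, phi (v i)
        ≤ phi (w / (1 - μ)) * (1 - 1 / (N : ℝ)) := by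
  set γ := w / (1 - μ) with hγdef
  have hμ1' : (0:ℝ) < 1 - μ := by linarith
  have hγpos : 0 < γ := div_pos hw hμ1'
  have hNpos : (0:ℝ) < (N:ℝ) := by positivity
  have hphiγ : 0 ≤ phi γ := le_min (le_max_right _ _) zero_le_one
  constructor
  · -- lower bound
    have hstep : ∀ i : Fin N, (1 - μ ^ (i:ℕ)) * phi γ ≤ phi (v i) := by
      intro i
      have hc0 : 0 ≤ 1 - μ ^ (i:ℕ) := by
        have := pow_le_one₀ hμ0.le hμ1.le (n := (i:ℕ)); linarith
      have hc1 : 1 - μ ^ (i:ℕ) ≤ 1 := by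
        have := pow_pos hμ0 (i:ℕ); linarith
      calc (1 - μ ^ (i:ℕ)) * phi γ ≤ phi ((1 - μ ^ (i:ℕ)) * γ) :=
            phi_scale _ _ hc0 hc1 hγpos.le
        _ ≤ phi (v i) := phi_mono (hv i).1
    have hsum : ((N:ℝ) - (1 - μ ^ N) / (1 - μ)) * phi γ ≤ ∑ i, phi (v i) := by
      have h1 : ∑ i : Fin N, (1 - μ ^ (i:ℕ)) * phi γ ≤ ∑ i, phi (v i) :=
        Finset.sum_le_sum fun i _ => hstep i
      have hg : ∑ i ∈ Finset.range N, μ ^ i = (1 - μ ^ N) / (1 - μ) := by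
        rw [geom_sum_eq (by linarith : μ ≠ 1),
          div_eq_div_iff (by linarith) (by linarith)]
        ring
      have h2 : ∑ i : Fin N, (1 - μ ^ (i:ℕ)) * phi γ
          = ((N:ℝ) - (1 - μ ^ N) / (1 - μ)) * phi γ := by
        rw [Fin.sum_univ_eq_sum_range (fun i => (1 - μ ^ i) * phi γ)]
        rw [← Finset.sum_mul, Finset.sum_sub_distrib, Finset.sum_const,
          Finset.card_range, hg]
        simp
      linarith
    have : phi γ * (1 - (1 / (N:ℝ)) * (1 - μ ^ N) / (1 - μ))
        = (1/(N:ℝ)) * (((N:ℝ) - (1 - μ ^ N) / (1 - μ)) * phi γ) := by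
      field_simp
    rw [this]
    apply mul_le_mul_of_nonneg_left hsum (by positivity)
  · -- upper bound
    have hub : ∀ i : Fin N, phi (v i) ≤ phi γ := fun i => phi_mono (hv i).2
    have h0 : phi (v ⟨0, by omega⟩) = 0 := by
      rw [hv0]; simp [phi]
    have hsum : ∑ i, phi (v i) ≤ ((N:ℝ) - 1) * phi γ := by
      have hsplit := Finset.add_sum_erase Finset.univ (fun i : Fin N => phi (v i))
        (Finset.mem_univ (⟨0, by omega⟩ : Fin N))
      have hcard : (Finset.univ.erase (⟨0, by omega⟩ : Fin N)).card = N - 1 := by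
        rw [Finset.card_erase_of_mem (Finset.mem_univ _), Finset.card_univ,
          Fintype.card_fin]
      have hrest : ∑ i ∈ Finset.univ.erase (⟨0, by omega⟩ : Fin N), phi (v i)
          ≤ ((N:ℝ) - 1) * phi γ := by
        calc ∑ i ∈ Finset.univ.erase (⟨0, by omega⟩ : Fin N), phi (v i)
            ≤ ∑ i ∈ Finset.univ.erase (⟨0, by omega⟩ : Fin N), phi γ :=
              Finset.sum_le_sum fun i _ => hub i
          _ = ((N:ℝ) - 1) * phi γ := by
              rw [Finset.sum_const, hcard, nsmul_eq_mul]
              have : ((N - 1 : ℕ) : ℝ) = (N:ℝ) - 1 := by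
                have : 1 ≤ N := by omega
                push_cast [this]; ring
              rw [this]
      calc ∑ i, phi (v i)
          = phi (v ⟨0, by omega⟩)
            + ∑ i ∈ Finset.univ.erase (⟨0, by omega⟩ : Fin N), phi (v i) :=
            hsplit.symm
        _ ≤ ((N:ℝ) - 1) * phi γ := by rw [h0]; linarith
    have : phi γ * (1 - 1/(N:ℝ)) = (1/(N:ℝ)) * (((N:ℝ) - 1) * phi γ) := by
      field_simp
    rw [this]
    exact mul_le_mul_of_nonneg_left hsum (by positivity)
end

section
/- For all real numbers x and y with 0 < x ≤ 1 and 0 < y < 1, one has 1 − x·y ≤ (1 − y)^{(1−y)·x}. -/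
/-- For all real `x, y` with `0 < x ≤ 1` and `0 < y < 1`,
`1 − x·y ≤ (1 − y)^{(1−y)·x}` (real-exponent power). -/
theorem one_sub_mul_le_rpow (x y : ℝ) (hx0 : 0 < x) (hx1 : x ≤ 1)
    (hy0 : 0 < y) (hy1 : y < 1) :
    1 - x * y ≤ (1 - y) ^ ((1 - y) * x) := by
  have h1y : (0:ℝ) < 1 - y := by linarith
  have hlog : Real.log (1 - y) ≥ -y / (1 - y) := by
    have h := Real.log_le_sub_one_of_pos (x := (1 - y)⁻¹) (by positivity)
    rw [Real.log_inv] at h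
    have : (1 - y)⁻¹ - 1 = y / (1 - y) := by field_simp; ring
    rw [this] at h
    have : -Real.log (1 - y) ≤ y / (1 - y) := h
    linarith [this, (by ring : -y / (1 - y) = -(y / (1 - y)))]
  have key : -(x * y) ≤ ((1 - y) * x) * Real.log (1 - y) := by
    have hpos : 0 < (1 - y) * x := by positivity
    have := mul_le_mul_of_nonneg_left hlog (le_of_lt hpos)
    calc -(x * y) = ((1 - y) * x) * (-y / (1 - y)) := by field_simp
      _ ≤ ((1 - y) * x) * Real.log (1 - y) := this
  calc 1 - x * y = -(x * y) + 1 := by ring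
    _ ≤ Real.exp (-(x * y)) := Real.add_one_le_exp _
    _ ≤ Real.exp (((1 - y) * x) * Real.log (1 - y)) := Real.exp_le_exp.mpr key
    _ = (1 - y) ^ ((1 - y) * x) := by
        rw [Real.rpow_def_of_pos h1y]; ring_nf
end

section
/- Upper bound for the survival product: For all μ ∈ (0,1), y ∈ (0,1) and every t ∈ ℕ, Π_{k=0}^{t−1} (1 − μ^k y) ≤ (1 − y)^{(1 − y)(1 − μ^t)/(1 − μ)}. -/
/-- Upper bound for the survival product.  For all `μ ∈ (0,1)`,
`y ∈ (0,1)` and every `t ∈ ℕ`,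
`Π_{k=0}^{t−1} (1 − μ^k y) ≤ (1 − y)^{(1 − y)(1 − μ^t)/(1 − μ)}`. -/
theorem survival_product_upper (μ y : ℝ) (hμ0 : 0 < μ) (hμ1 : μ < 1)
    (hy0 : 0 < y) (hy1 : y < 1) (t : ℕ) :
    ∏ k ∈ Finset.range t, (1 - μ ^ k * y)
      ≤ (1 - y) ^ ((1 - y) * (1 - μ ^ t) / (1 - μ)) := by
  have h1y : 0 < 1 - y := by linarith
  have hfac : ∀ k : ℕ, 0 < 1 - μ ^ k * y := by
    intro k
    have hk0 : 0 < μ ^ k := pow_pos hμ0 k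
    have hk1 : μ ^ k ≤ 1 := pow_le_one₀ hμ0.le hμ1.le
    nlinarith
  -- key pointwise bound
  have hC : -y ≤ (1 - y) * Real.log (1 - y) := by
    have hB := Real.log_le_sub_one_of_pos (inv_pos.mpr h1y)
    rw [Real.log_inv] at hB
    have h1yne : (1 - y) ≠ 0 := ne_of_gt h1y
    have hB' : -((1 - y)⁻¹ - 1) ≤ Real.log (1 - y) := by linarith
    have := mul_le_mul_of_nonneg_left hB' h1y.le
    have hinv : (1 - y) * (1 - y)⁻¹ = 1 := mul_inv_cancel₀ h1yne
    nlinarith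
  have hterm : ∀ k ∈ Finset.range t,
      Real.log (1 - μ ^ k * y) ≤ μ ^ k * ((1 - y) * Real.log (1 - y)) := by
    intro k _
    have hk0 : 0 < μ ^ k := pow_pos hμ0 k
    have hA := Real.log_le_sub_one_of_pos (hfac k)
    have h2 : μ ^ k * (-y) ≤ μ ^ k * ((1 - y) * Real.log (1 - y)) :=
      mul_le_mul_of_nonneg_left hC hk0.le
    nlinarith
  have hsum := Finset.sum_le_sum hterm
  rw [← Finset.sum_mul] at hsum
  have hgeom : ∑ k ∈ Finset.range t, μ ^ k = (1 - μ ^ t) / (1 - μ) := by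
    rw [geom_sum_eq (ne_of_lt hμ1)]
    rw [show μ ^ t - 1 = -(1 - μ ^ t) by ring, show μ - 1 = -(1 - μ) by ring,
      neg_div_neg_eq]
  rw [hgeom] at hsum
  have hprod : ∏ k ∈ Finset.range t, (1 - μ ^ k * y)
      = Real.exp (∑ k ∈ Finset.range t, Real.log (1 - μ ^ k * y)) := by
    rw [Real.exp_sum]
    exact Finset.prod_congr rfl fun k _ => (Real.exp_log (hfac k)).symm
  rw [hprod, Real.rpow_def_of_pos h1y, Real.exp_le_exp]
  calc ∑ k ∈ Finset.range t, Real.log (1 - μ ^ k * y)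
      ≤ (1 - μ ^ t) / (1 - μ) * ((1 - y) * Real.log (1 - y)) := hsum
    _ = Real.log (1 - y) * ((1 - y) * (1 - μ ^ t) / (1 - μ)) := by ring
end

section
/- Bounds on the infinite survival product: For all μ ∈ (0,1) and y ∈ (0,1), the infinite product Π_{k=0}^{∞} (1 − μ^k y) converges to a strictly positive limit and satisfies (1 − y)^{1/(1−μ)} ≤ Π_{k=0}^{∞} (1 − μ^k y) ≤ (1 − y)^{(1−y)/(1−μ)}. -/
open Filter

private lemma isp_aux (μ y : ℝ) (hμ0 : 0 < μ) (hμ1 : μ < 1)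
    (hy0 : 0 < y) (hy1 : y < 1) (k : ℕ) :
    0 < 1 - μ ^ k * y ∧
    μ ^ k * Real.log (1 - y) ≤ Real.log (1 - μ ^ k * y) ∧
    Real.log (1 - μ ^ k * y) ≤ -(μ ^ k * y) := by
  have hμk0 : 0 < μ ^ k := pow_pos hμ0 k
  have hμk1 : μ ^ k ≤ 1 := pow_le_one₀ hμ0.le hμ1.le
  have hxy : μ ^ k * y ≤ y := by nlinarith
  have hpos : 0 < 1 - μ ^ k * y := by nlinarith
  refine ⟨hpos, ?_, ?_⟩
  · have hb := rpow_one_add_le_one_add_mul_self (s := -y) (by linarith) hμk0.le hμk1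
    rw [← sub_eq_add_neg, mul_neg, ← sub_eq_add_neg] at hb
    have : (1 - y) ^ (μ ^ k : ℝ) ≤ 1 - μ ^ k * y := hb
    calc μ ^ k * Real.log (1 - y) = Real.log ((1 - y) ^ (μ ^ k : ℝ)) := by
          rw [Real.log_rpow (by linarith)]
      _ ≤ Real.log (1 - μ ^ k * y) :=
          Real.log_le_log (Real.rpow_pos_of_pos (by linarith) _) this
  · have := Real.log_le_sub_one_of_pos hpos
    linarith

/-- Bounds on the infinite survival product.  For all
`μ ∈ (0,1)` and `y ∈ (0,1)`, the infinite product `Π_{k=0}^∞ (1 − μ^k y)`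
converges to a strictly positive limit `L` satisfying
`(1 − y)^{1/(1−μ)} ≤ L ≤ (1 − y)^{(1−y)/(1−μ)}`. -/
theorem infinite_survival_product_bounds (μ y : ℝ) (hμ0 : 0 < μ) (hμ1 : μ < 1)
    (hy0 : 0 < y) (hy1 : y < 1) :
    ∃ L : ℝ, 0 < L ∧
      Tendsto (fun t => ∏ k ∈ Finset.range t, (1 - μ ^ k * y)) atTop (nhds L) ∧
      (1 - y) ^ ((1 : ℝ) / (1 - μ)) ≤ L ∧ L ≤ (1 - y) ^ ((1 - y) / (1 - μ)) := by
  set f : ℕ → ℝ := fun k => Real.log (1 - μ ^ k * y) with hf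
  have haux := isp_aux μ y hμ0 hμ1 hy0 hy1
  have hly : Real.log (1 - y) < 0 :=
    Real.log_neg (by linarith) (by linarith)
  -- summability of lower bound function
  have hsg : Summable (fun k : ℕ => μ ^ k) :=
    summable_geometric_of_lt_one hμ0.le hμ1
  have hslo : Summable (fun k : ℕ => μ ^ k * Real.log (1 - y)) := hsg.mul_right _
  have hsup : Summable (fun k : ℕ => -(μ ^ k * y)) := ((hsg.mul_right y).neg)
  have hsf : Summable f := by
    have h1 : ∀ k, 0 ≤ -f k := fun k => by
      have hμk0 : 0 < μ ^ k := pow_pos hμ0 k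
      have := (haux k).2.2
      simp only [hf]
      nlinarith
    have h2 : ∀ k, -f k ≤ -(μ ^ k * Real.log (1 - y)) := fun k => by
      have := (haux k).2.1
      simp only [hf]
      linarith
    have h3 : Summable (fun k => -f k) :=
      Summable.of_nonneg_of_le h1 h2 hslo.neg
    exact h3.neg.congr (fun k => by simp)
  have hS := hsf.hasSum
  set S := ∑' k, f k with hSdef
  -- bounds on S
  have hlow : Real.log (1 - y) / (1 - μ) ≤ S := by
    have h1 : ∑' k, μ ^ k * Real.log (1 - y) ≤ S :=
      Summable.tsum_le_tsum (fun k => (haux k).2.1) hslo hsf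
    have h2 : ∑' k : ℕ, μ ^ k * Real.log (1 - y)
        = Real.log (1 - y) / (1 - μ) := by
      rw [tsum_mul_right, tsum_geometric_of_lt_one hμ0.le hμ1]
      field_simp
    linarith [h2 ▸ h1]
  have hupp : S ≤ (1 - y) * Real.log (1 - y) / (1 - μ) := by
    have h1 : S ≤ ∑' k : ℕ, -(μ ^ k * y) :=
      Summable.tsum_le_tsum (fun k => (haux k).2.2) hsf hsup
    have h2 : ∑' k : ℕ, -(μ ^ k * y) = -y / (1 - μ) := by
      rw [tsum_neg, tsum_mul_right, tsum_geometric_of_lt_one hμ0.le hμ1]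
      field_simp
    have h3 : -y / (1 - μ) ≤ (1 - y) * Real.log (1 - y) / (1 - μ) := by
      have hu : 0 < 1 - y := by linarith
      have : Real.log (1 - y)⁻¹ ≤ (1 - y)⁻¹ - 1 :=
        Real.log_le_sub_one_of_pos (by positivity)
      rw [Real.log_inv] at this
      have hkey : -y ≤ (1 - y) * Real.log (1 - y) := by
        have := mul_le_mul_of_nonneg_left this hu.le
        rw [mul_sub, mul_inv_cancel₀ hu.ne'] at this
        nlinarith
      exact div_le_div_of_nonneg_right hkey (by linarith) |>.trans_eq rfl
    linarith [h2 ▸ h1]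
  refine ⟨Real.exp S, Real.exp_pos S, ?_, ?_, ?_⟩
  · have ht : Tendsto (fun t => ∑ k ∈ Finset.range t, f k) atTop (nhds S) :=
      hS.tendsto_sum_nat
    have := (Real.continuous_exp.tendsto S).comp ht
    refine this.congr (fun t => ?_)
    simp only [Function.comp_apply, Real.exp_sum]
    exact Finset.prod_congr rfl (fun k _ => Real.exp_log (haux k).1
      |>.symm ▸ rfl)
  · rw [Real.rpow_def_of_pos (by linarith)]
    apply Real.exp_le_exp.mpr
    have heq : Real.log (1 - y) * ((1 : ℝ) / (1 - μ)) = Real.log (1 - y) / (1 - μ) := by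
      ring
    linarith
  · rw [Real.rpow_def_of_pos (by linarith)]
    apply Real.exp_le_exp.mpr
    have heq : Real.log (1 - y) * ((1 - y) / (1 - μ)) = (1 - y) * Real.log (1 - y) / (1 - μ) := by
      ring
    linarith
end

section
/- Probability that the system completely ceases to fire at a non-firing block: Let (Ω, P) be a probability space, μ ∈ (0,1), m ∈ ℕ with m ≥ 1, 0 < η ≤ θ < 1, and let A_0 ⊇ A_1 ⊇ A_2 ⊇ … be a decreasing sequence of events with P(A_0) = 1 such that for every k ≥ 0 with P(A_k) > 0 one has 1 − μ^{m+k} θ ≤ P(A_{k+1} | A_k) ≤ 1 − μ^{m+k} η. Set K = (1 − μ^m θ)^{−1/(1−μ)} and J = (1 − μ^m η)^{−(1−η)/(1−μ)}. Then 1/K ≤ P(⋂_{k=0}^{∞} A_k) ≤ 1/J. (Here A_k is the event that the non-firing block, begun after m initial failures from the metastable basin, has lasted at least k further steps, and ⋂_k A_k is the event S = ∞ that the system never fires again.) -/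
open MeasureTheory ProbabilityTheory

private lemma rpow_sum_aux {x : ℝ} (hx : 0 < x) (c : ℕ → ℝ) :
    ∀ n, x ^ (∑ k ∈ Finset.range n, c k) = ∏ k ∈ Finset.range n, x ^ (c k)
  | 0 => by simp
  | n + 1 => by
    rw [Finset.sum_range_succ, Finset.prod_range_succ, Real.rpow_add hx,
      rpow_sum_aux hx c n]

private lemma log_aux {x η : ℝ} (hx : 0 ≤ x) (hxη : x ≤ η) (hη : η < 1) :
    -x ≤ (1 - η) * Real.log (1 - x) := by
  have hx1 : x < 1 := lt_of_le_of_lt hxη hη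
  have h1x : 0 < 1 - x := by linarith
  have h := Real.log_le_sub_one_of_pos (inv_pos.mpr h1x)
  rw [Real.log_inv] at h
  have heq : (1 - x)⁻¹ - 1 = x / (1 - x) := by field_simp; ring
  rw [heq] at h
  have hlog : -(x / (1 - x)) ≤ Real.log (1 - x) := by linarith
  have hdiv : 0 ≤ x / (1 - x) := div_nonneg hx h1x.le
  calc -x = -(x / (1 - x)) * (1 - x) := by field_simp
    _ ≤ -(x / (1 - x)) * (1 - η) :=
        mul_le_mul_of_nonpos_left (by linarith) (by linarith)
    _ = (1 - η) * -(x / (1 - x)) := by ring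
    _ ≤ (1 - η) * Real.log (1 - x) :=
        mul_le_mul_of_nonneg_left hlog (by linarith)

/-- Probability that the system completely ceases to fire at a
non-firing block.  Let `(Ω, P)` be a probability space, `μ ∈ (0,1)`, `m ≥ 1`,
`0 < η ≤ θ < 1`, and `A_0 ⊇ A_1 ⊇ …` a decreasing sequence of events with
`P(A_0) = 1` such that whenever `P(A_k) > 0`,
`1 − μ^{m+k} θ ≤ P(A_{k+1} | A_k) ≤ 1 − μ^{m+k} η`.  With
`K = (1 − μ^m θ)^{−1/(1−μ)}` and `J = (1 − μ^m η)^{−(1−η)/(1−μ)}`, one has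
`1/K ≤ P(⋂_k A_k) ≤ 1/J`. -/
theorem ceases_to_fire_bounds {Ω : Type*} [MeasurableSpace Ω]
    (P : Measure Ω) [IsProbabilityMeasure P]
    (μ : ℝ) (hμ0 : 0 < μ) (hμ1 : μ < 1)
    (m : ℕ) (hm : 1 ≤ m)
    (η θ : ℝ) (hη : 0 < η) (hηθ : η ≤ θ) (hθ : θ < 1)
    (A : ℕ → Set Ω) (hmeas : ∀ k, MeasurableSet (A k))
    (hdec : ∀ k, A (k + 1) ⊆ A k)
    (hA0 : P (A 0) = 1)
    (hcond : ∀ k : ℕ, 0 < P (A k) →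
      ENNReal.ofReal (1 - μ ^ (m + k) * θ) ≤ P[A (k + 1) | A k] ∧
        P[A (k + 1) | A k] ≤ ENNReal.ofReal (1 - μ ^ (m + k) * η)) :
    ENNReal.ofReal (1 / (1 - μ ^ m * θ) ^ (-(1 / (1 - μ))))
        ≤ P (⋂ k, A k) ∧
      P (⋂ k, A k)
        ≤ ENNReal.ofReal (1 / (1 - μ ^ m * η) ^ (-((1 - η) / (1 - μ)))) := by
  have hθ0 : 0 < θ := lt_of_lt_of_le hη hηθ
  have hη1 : η < 1 := lt_of_le_of_lt hηθ hθ
  have hμm1 : μ ^ m ≤ 1 := pow_le_one₀ hμ0.le hμ1.le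
  have hμm0 : 0 < μ ^ m := pow_pos hμ0 m
  have hbθ : 0 < 1 - μ ^ m * θ := by nlinarith
  have hbη : 0 < 1 - μ ^ m * η := by nlinarith
  have hμmη : μ ^ m * η ≤ η := by nlinarith
  have h1μ : 0 < 1 - μ := by linarith
  have hfθ : ∀ k : ℕ, 1 - μ ^ m * θ ≤ 1 - μ ^ (m + k) * θ := by
    intro k
    have : μ ^ (m + k) ≤ μ ^ m := pow_le_pow_of_le_one hμ0.le hμ1.le (by omega)
    nlinarith
  have hfη : ∀ k : ℕ, 0 < 1 - μ ^ (m + k) * η := by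
    intro k
    have h1 : μ ^ (m + k) ≤ μ ^ m := pow_le_pow_of_le_one hμ0.le hμ1.le (by omega)
    nlinarith
  have key : ∀ n : ℕ,
      ENNReal.ofReal (∏ k ∈ Finset.range n, (1 - μ ^ (m + k) * θ)) ≤ P (A n) ∧
      P (A n) ≤ ENNReal.ofReal (∏ k ∈ Finset.range n, (1 - μ ^ (m + k) * η)) := by
    intro n
    induction n with
    | zero => simp [hA0]
    | succ n ih =>
      have hprodθ : 0 < ∏ k ∈ Finset.range n, (1 - μ ^ (m + k) * θ) :=
        Finset.prod_pos fun k _ => lt_of_lt_of_le hbθ (hfθ k)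
      have hpos : 0 < P (A n) :=
        lt_of_lt_of_le (by simpa using ENNReal.ofReal_pos.mpr hprodθ) ih.1
      obtain ⟨h1, h2⟩ := hcond n hpos
      have hrec : P (A (n + 1)) = P[A (n + 1) | A n] * P (A n) := by
        rw [cond_apply (hmeas n), Set.inter_eq_right.mpr (hdec n), mul_comm,
          ← mul_assoc, ENNReal.mul_inv_cancel hpos.ne' (measure_ne_top P _), one_mul]
      constructor
      · rw [Finset.prod_range_succ, ENNReal.ofReal_mul hprodθ.le, hrec,
          mul_comm (ENNReal.ofReal _)]
        exact mul_le_mul' h1 ih.1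
      · rw [Finset.prod_range_succ, hrec, mul_comm,
          ENNReal.ofReal_mul (Finset.prod_nonneg fun k _ => (hfη k).le)]
        exact mul_le_mul' ih.2 h2
  have hanti : Antitone A := antitone_nat_of_succ_le hdec
  set s : ℕ → ℝ := fun n => ∑ k ∈ Finset.range n, μ ^ k with hs
  have hs_le : ∀ n, s n ≤ (1 - μ)⁻¹ := by
    intro n
    have hg : s n = (μ ^ n - 1) / (μ - 1) := geom_sum_eq (ne_of_lt hμ1) n
    have hg2 : (μ ^ n - 1) / (μ - 1) = (1 - μ ^ n) * (1 - μ)⁻¹ := by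
      rw [show μ ^ n - 1 = -(1 - μ ^ n) by ring, show μ - 1 = -(1 - μ) by ring,
        neg_div_neg_eq, div_eq_mul_inv]
    rw [hg, hg2]
    have hpn : 0 < μ ^ n := pow_pos hμ0 n
    calc (1 - μ ^ n) * (1 - μ)⁻¹ ≤ 1 * (1 - μ)⁻¹ :=
          mul_le_mul_of_nonneg_right (by linarith) (inv_pos.mpr h1μ).le
      _ = (1 - μ)⁻¹ := one_mul _
  constructor
  · -- lower bound
    have hL : ∀ n, ENNReal.ofReal ((1 - μ ^ m * θ) ^ (1 / (1 - μ))) ≤ P (A n) := by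
      intro n
      refine le_trans (ENNReal.ofReal_le_ofReal ?_) (key n).1
      calc (1 - μ ^ m * θ) ^ (1 / (1 - μ))
          ≤ (1 - μ ^ m * θ) ^ (s n) :=
            Real.rpow_le_rpow_of_exponent_ge hbθ (by nlinarith)
              (by rw [one_div]; exact hs_le n)
        _ = ∏ k ∈ Finset.range n, (1 - μ ^ m * θ) ^ ((μ : ℝ) ^ k) :=
            rpow_sum_aux hbθ _ n
        _ ≤ ∏ k ∈ Finset.range n, (1 - μ ^ (m + k) * θ) := by
            apply Finset.prod_le_prod
            · intro k _; positivity
            · intro k _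
              have hb := rpow_one_add_le_one_add_mul_self (s := -(μ ^ m * θ))
                (by nlinarith) (p := μ ^ k) (pow_nonneg hμ0.le k)
                (pow_le_one₀ hμ0.le hμ1.le)
              have he : (1 : ℝ) - μ ^ m * θ = 1 + -(μ ^ m * θ) := by ring
              rw [he]
              calc (1 + -(μ ^ m * θ)) ^ ((μ : ℝ) ^ k)
                  ≤ 1 + μ ^ k * -(μ ^ m * θ) := hb
                _ = 1 - μ ^ (m + k) * θ := by rw [pow_add]; ring
    have hre : (1 : ℝ) / (1 - μ ^ m * θ) ^ (-(1 / (1 - μ)))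
        = (1 - μ ^ m * θ) ^ (1 / (1 - μ)) := by
      rw [Real.rpow_neg hbθ.le, one_div, inv_inv]
    rw [hre]
    exact ge_of_tendsto'
      (tendsto_measure_iInter_atTop (fun n => (hmeas n).nullMeasurableSet) hanti
        ⟨0, measure_ne_top P _⟩) hL
  · -- upper bound
    have hU : ∀ n, P (⋂ k, A k) ≤ ENNReal.ofReal ((1 - μ ^ m * η) ^ ((1 - η) * s n)) := by
      intro n
      refine le_trans (le_trans (measure_mono (Set.iInter_subset A n)) (key n).2)
        (ENNReal.ofReal_le_ofReal ?_)
      calc ∏ k ∈ Finset.range n, (1 - μ ^ (m + k) * η)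
          ≤ ∏ k ∈ Finset.range n, (1 - μ ^ m * η) ^ ((1 - η) * μ ^ k) := by
            apply Finset.prod_le_prod (fun k _ => (hfη k).le)
            intro k _
            rw [Real.rpow_def_of_pos hbη]
            have hstep1 : 1 - μ ^ (m + k) * η ≤ Real.exp (-(μ ^ (m + k) * η)) := by
              have := Real.add_one_le_exp (-(μ ^ (m + k) * η))
              linarith
            refine le_trans hstep1 (Real.exp_le_exp.mpr ?_)
            have hcore := log_aux (le_of_lt (by positivity : (0:ℝ) < μ ^ m * η)) hμmη hη1
            have hk : (0 : ℝ) ≤ μ ^ k := pow_nonneg hμ0.le k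
            calc -(μ ^ (m + k) * η) = μ ^ k * -(μ ^ m * η) := by rw [pow_add]; ring
              _ ≤ μ ^ k * ((1 - η) * Real.log (1 - μ ^ m * η)) :=
                  mul_le_mul_of_nonneg_left hcore hk
              _ = Real.log (1 - μ ^ m * η) * ((1 - η) * μ ^ k) := by ring
        _ = (1 - μ ^ m * η) ^ ((1 - η) * s n) := by
            rw [show (1 - η) * s n = ∑ k ∈ Finset.range n, (1 - η) * μ ^ k from
              Finset.mul_sum _ _ _, rpow_sum_aux hbη]
    have hsum : Filter.Tendsto s Filter.atTop (nhds (1 - μ)⁻¹) :=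
      (hasSum_geometric_of_lt_one hμ0.le hμ1).tendsto_sum_nat
    have htend : Filter.Tendsto
        (fun n => ENNReal.ofReal ((1 - μ ^ m * η) ^ ((1 - η) * s n))) Filter.atTop
        (nhds (ENNReal.ofReal ((1 - μ ^ m * η) ^ ((1 - η) * (1 - μ)⁻¹)))) := by
      apply (ENNReal.continuous_ofReal.tendsto _).comp
      have hm2 : Filter.Tendsto (fun n => (1 - η) * s n) Filter.atTop
          (nhds ((1 - η) * (1 - μ)⁻¹)) := hsum.const_mul _
      have hc : Continuous fun e : ℝ => (1 - μ ^ m * η) ^ e := by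
        simp only [Real.rpow_def_of_pos hbη]
        exact Real.continuous_exp.comp (continuous_const.mul continuous_id)
      exact (hc.tendsto _).comp hm2
    have hfin := ge_of_tendsto' htend hU
    have hre : (1 : ℝ) / (1 - μ ^ m * η) ^ (-((1 - η) / (1 - μ)))
        = (1 - μ ^ m * η) ^ ((1 - η) * (1 - μ)⁻¹) := by
      rw [Real.rpow_neg hbη.le, one_div, inv_inv, div_eq_mul_inv]
    rwa [hre]
end
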